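/- Vector-valued nonlinearity bounder (Lemma 4 of the paper): let g : ℝᵐ → ℝᵐ be twice continuously differentiable, q ∈ ℝᵐ, Q ∈ 𝕊₊^m, and D a convex compact set containing E(q,Q). Suppose for each i there is an invertible Sᵢ ∈ ℝ^{m×m} and a constant F̄ᵢ ≥ 0 with F̄ᵢ ≥ ‖(∂²gᵢ/∂y²)(y) Sᵢ‖_F for all y ∈ D. Define the diagonal matrix Q_n := (1/4) diag( F̄ᵢ² ‖Sᵢ⁻¹ Q‖_F² ). Then for every δ ∈ E(Q), the Taylor remainder n(δ) := g(q+δ) − g(q) − (∂g/∂y)(q) δ lies in the ellipsoid E(Q_n). -/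

import Mathlib

open Matrix MeasureTheory

/-- The square root `PosSemidef.sqrt` of the older Mathlib, spelled out. -/
noncomputable def posSemidefSqrt {m : ℕ} {Q : Matrix (Fin m) (Fin m) ℝ} (hQ : Q.PosSemidef) :
    Matrix (Fin m) (Fin m) ℝ :=
  (hQ.1.eigenvectorUnitary : Matrix (Fin m) (Fin m) ℝ) *
    diagonal ((↑) ∘ (√·) ∘ hQ.1.eigenvalues) *
    (star hQ.1.eigenvectorUnitary : Matrix (Fin m) (Fin m) ℝ)

noncomputable def ellipsoid {m : ℕ} {Q : Matrix (Fin m) (Fin m) ℝ}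
    (q : Fin m → ℝ) (hQ : Q.PosSemidef) : Set (Fin m → ℝ) :=
  {x | ∃ v : Fin m → ℝ, v ⬝ᵥ v ≤ 1 ∧ x = q + (posSemidefSqrt hQ).mulVec v}


noncomputable def frob {p q : ℕ} (M : Matrix (Fin p) (Fin q) ℝ) : ℝ :=
  Real.sqrt (Matrix.trace (Mᵀ * M))

noncomputable def hess {m : ℕ} (g : (Fin m → ℝ) → ℝ) (y : Fin m → ℝ) :
    Matrix (Fin m) (Fin m) ℝ :=
  Matrix.of fun i j => fderiv ℝ (fun z => fderiv ℝ g z (Pi.single j 1)) y (Pi.single i 1)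

lemma posSemidefSqrt_transpose {m : ℕ} {Q : Matrix (Fin m) (Fin m) ℝ} (hQ : Q.PosSemidef) :
    (posSemidefSqrt hQ)ᵀ = posSemidefSqrt hQ := by
  rw [← Matrix.conjTranspose_eq_transpose_of_trivial]
  unfold posSemidefSqrt
  rw [Matrix.conjTranspose_mul, Matrix.conjTranspose_mul, Matrix.diagonal_conjTranspose,
    ← Matrix.star_eq_conjTranspose, ← Matrix.star_eq_conjTranspose, star_star, Matrix.mul_assoc]
  congr 3

lemma posSemidefSqrt_mul_self {m : ℕ} {Q : Matrix (Fin m) (Fin m) ℝ} (hQ : Q.PosSemidef) :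
    posSemidefSqrt hQ * posSemidefSqrt hQ = Q := by
  unfold posSemidefSqrt
  conv_rhs => rw [hQ.1.spectral_theorem, Unitary.conjStarAlgAut_apply]
  have hu := Unitary.coe_star_mul_self hQ.1.eigenvectorUnitary
  have hd : diagonal ((↑) ∘ (√·) ∘ hQ.1.eigenvalues) * diagonal ((↑) ∘ (√·) ∘ hQ.1.eigenvalues)
      = (diagonal (RCLike.ofReal ∘ hQ.1.eigenvalues) : Matrix (Fin m) (Fin m) ℝ) := by
    rw [Matrix.diagonal_mul_diagonal]
    congr 1
    funext i
    simp [Real.mul_self_sqrt (hQ.eigenvalues_nonneg i)]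
  calc _ = (hQ.1.eigenvectorUnitary : Matrix (Fin m) (Fin m) ℝ) *
        (diagonal ((↑) ∘ (√·) ∘ hQ.1.eigenvalues) *
        ((star hQ.1.eigenvectorUnitary : Matrix (Fin m) (Fin m) ℝ) * (hQ.1.eigenvectorUnitary : Matrix (Fin m) (Fin m) ℝ)) *
        diagonal ((↑) ∘ (√·) ∘ hQ.1.eigenvalues)) *
        (star hQ.1.eigenvectorUnitary : Matrix (Fin m) (Fin m) ℝ) := by
          simp only [Matrix.mul_assoc]
    _ = _ := by rw [hu, Matrix.mul_one, hd]

namespace Helper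

noncomputable def nor {m : ℕ} (x : Fin m → ℝ) : ℝ := Real.sqrt (x ⬝ᵥ x)

lemma dot_self_nonneg {m : ℕ} (x : Fin m → ℝ) : 0 ≤ x ⬝ᵥ x :=
  Finset.sum_nonneg fun i _ => mul_self_nonneg _

lemma nor_nonneg {m : ℕ} (x : Fin m → ℝ) : 0 ≤ nor x := Real.sqrt_nonneg _

lemma nor_sq {m : ℕ} (x : Fin m → ℝ) : nor x ^ 2 = x ⬝ᵥ x :=
  Real.sq_sqrt (dot_self_nonneg x)

lemma abs_dot_le {m : ℕ} (x y : Fin m → ℝ) : |x ⬝ᵥ y| ≤ nor x * nor y := by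
  have h : (x ⬝ᵥ y) ^ 2 ≤ (x ⬝ᵥ x) * (y ⬝ᵥ y) := by
    have := Finset.sum_mul_sq_le_sq_mul_sq Finset.univ x y
    simpa [dotProduct, pow_two, Finset.mul_sum, mul_comm, mul_left_comm,
      mul_assoc] using this
  calc |x ⬝ᵥ y| = Real.sqrt ((x ⬝ᵥ y) ^ 2) := (Real.sqrt_sq_eq_abs _).symm
    _ ≤ Real.sqrt ((x ⬝ᵥ x) * (y ⬝ᵥ y)) := Real.sqrt_le_sqrt h
    _ = nor x * nor y := Real.sqrt_mul (dot_self_nonneg x) _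

lemma frob_nonneg {p q : ℕ} (M : Matrix (Fin p) (Fin q) ℝ) : 0 ≤ frob M := Real.sqrt_nonneg _

lemma trace_transpose_mul_self_nonneg {p q : ℕ} (M : Matrix (Fin p) (Fin q) ℝ) :
    0 ≤ Matrix.trace (Mᵀ * M) := by
  rw [Matrix.trace]
  refine Finset.sum_nonneg fun j _ => ?_
  rw [Matrix.diag_apply, Matrix.mul_apply]
  exact Finset.sum_nonneg fun i _ => by
    simpa [Matrix.transpose_apply] using mul_self_nonneg (M i j)

lemma frob_sq {p q : ℕ} (M : Matrix (Fin p) (Fin q) ℝ) :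
    frob M ^ 2 = Matrix.trace (Mᵀ * M) :=
  Real.sq_sqrt (trace_transpose_mul_self_nonneg M)

lemma frob_transpose {p q : ℕ} (M : Matrix (Fin p) (Fin q) ℝ) : frob Mᵀ = frob M := by
  unfold frob
  rw [Matrix.transpose_transpose, Matrix.trace_mul_comm]

lemma dot_mulVec_eq {m : ℕ} (a : Fin m → ℝ) (B : Matrix (Fin m) (Fin m) ℝ) (x : Fin m → ℝ) :
    a ⬝ᵥ (B *ᵥ x) = (Bᵀ *ᵥ a) ⬝ᵥ x := by
  rw [dotProduct_mulVec, Matrix.mulVec_transpose]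

lemma mulVec_dot_self {m : ℕ} (B : Matrix (Fin m) (Fin m) ℝ) (x : Fin m → ℝ) :
    (B *ᵥ x) ⬝ᵥ (B *ᵥ x) = x ⬝ᵥ ((Bᵀ * B) *ᵥ x) := by
  rw [dot_mulVec_eq, Matrix.mulVec_mulVec, dotProduct_comm]

lemma nor_smul {m : ℕ} {t : ℝ} (ht : 0 ≤ t) (x : Fin m → ℝ) : nor (t • x) = t * nor x := by
  unfold nor
  rw [smul_dotProduct, dotProduct_smul, smul_eq_mul, smul_eq_mul, ← mul_assoc,
    Real.sqrt_mul (mul_self_nonneg t), Real.sqrt_mul_self ht]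

lemma sum_dotProduct' {k m : ℕ} (f : Fin k → (Fin m → ℝ)) (y : Fin m → ℝ) :
    (∑ j, f j) ⬝ᵥ y = ∑ j, (f j ⬝ᵥ y) := by
  simp only [dotProduct, Finset.sum_apply, Finset.sum_mul]
  exact Finset.sum_comm

lemma dotProduct_sum' {k m : ℕ} (y : Fin m → ℝ) (f : Fin k → (Fin m → ℝ)) :
    y ⬝ᵥ (∑ j, f j) = ∑ j, (y ⬝ᵥ f j) := by
  simp only [dotProduct, Finset.sum_apply, Finset.mul_sum]
  exact Finset.sum_comm

end Helper

open Helper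

/-- Key matrix inequality. -/
lemma quad_bound {m : ℕ} {Q H S : Matrix (Fin m) (Fin m) ℝ} (hQ : Q.PosSemidef)
    (hH : Hᵀ = H) (hS : IsUnit S.det) {v : Fin m → ℝ} (hv : v ⬝ᵥ v ≤ 1) :
    |(posSemidefSqrt hQ *ᵥ v) ⬝ᵥ (H *ᵥ (posSemidefSqrt hQ *ᵥ v))| ≤ frob (H * S) * frob (S⁻¹ * Q) := by
  classical
  set δ : Fin m → ℝ := posSemidefSqrt hQ *ᵥ v with hδdef
  set U : Matrix (Fin m) (Fin m) ℝ := (hQ.1.eigenvectorUnitary : Matrix (Fin m) (Fin m) ℝ) with hUdef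
  set e : Fin m → (Fin m → ℝ) := fun j => (WithLp.equiv 2 ((i : Fin m) → ℝ)) (hQ.1.eigenvectorBasis j) with hedef
  set lam : Fin m → ℝ := hQ.1.eigenvalues with hlamdef
  have hlam : ∀ j, 0 ≤ lam j := hQ.eigenvalues_nonneg
  have heU : ∀ j i, e j i = U i j := fun j i => rfl
  have hUstar : star U = Uᵀ := by
    rw [Matrix.star_eq_conjTranspose, Matrix.conjTranspose_eq_transpose_of_trivial]
  have hU1 : U * Uᵀ = 1 := by
    rw [← hUstar]
    exact (Matrix.mem_unitaryGroup_iff).mp (hQ.1.eigenvectorUnitary).2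
  have hU2 : Uᵀ * U = 1 := by
    rw [← hUstar]
    exact (Matrix.mem_unitaryGroup_iff').mp (hQ.1.eigenvectorUnitary).2
  have horth : ∀ j k, e j ⬝ᵥ e k = if j = k then 1 else 0 := by
    intro j k
    have := congrFun (congrFun hU2 j) k
    simpa [Matrix.mul_apply, Matrix.one_apply, dotProduct, heU] using this
  have heig : ∀ j, Q *ᵥ e j = lam j • e j := fun j => hQ.1.mulVec_eigenvectorBasis j
  -- trace lemma
  have tlem : ∀ A : Matrix (Fin m) (Fin m) ℝ, ∑ j, e j ⬝ᵥ (A *ᵥ e j) = Matrix.trace A := by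
    intro A
    have h1 : ∀ j, e j ⬝ᵥ (A *ᵥ e j) = (Uᵀ * A * U) j j := by
      intro j
      simp only [Matrix.mul_apply, Matrix.mulVec, dotProduct, heU, Finset.mul_sum,
        Matrix.transpose_apply, Finset.sum_mul]
      rw [Finset.sum_comm]
      exact Finset.sum_congr rfl fun a _ => Finset.sum_congr rfl fun b _ => by ring
    calc ∑ j, e j ⬝ᵥ (A *ᵥ e j) = ∑ j, (Uᵀ * A * U) j j := by simp [h1]
      _ = Matrix.trace (Uᵀ * A * U) := rfl
      _ = Matrix.trace (U * Uᵀ * A) := by rw [Matrix.trace_mul_cycle]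
      _ = Matrix.trace A := by rw [hU1, one_mul]
  have sum_nor_sq : ∀ B : Matrix (Fin m) (Fin m) ℝ, ∑ j, nor (B *ᵥ e j) ^ 2 = frob B ^ 2 := by
    intro B
    rw [frob_sq]
    rw [← tlem (Bᵀ * B)]
    exact Finset.sum_congr rfl fun j _ => by rw [nor_sq, mulVec_dot_self]
  -- coefficients and weights
  set c : Fin m → ℝ := fun j => e j ⬝ᵥ δ with hcdef
  set ρ : Fin m → ℝ := fun j => nor (S⁻¹ *ᵥ e j) with hρdef
  set β : Fin m → ℝ := fun j => nor ((H * S)ᵀ *ᵥ e j) with hβdef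
  set s : Fin m → ℝ := fun j => Real.sqrt (β j * ρ j) with hsdef
  have hρ0 : ∀ j, 0 ≤ ρ j := fun j => nor_nonneg _
  have hβ0 : ∀ j, 0 ≤ β j := fun j => nor_nonneg _
  have hs0 : ∀ j, 0 ≤ s j := fun j => Real.sqrt_nonneg _
  have hssq : ∀ j, s j ^ 2 = β j * ρ j := fun j => Real.sq_sqrt (mul_nonneg (hβ0 j) (hρ0 j))
  set M : Fin m → Fin m → ℝ := fun j k => e j ⬝ᵥ (H *ᵥ e k) with hMdef
  have hHS : H * S * S⁻¹ = H := by
    rw [Matrix.mul_assoc, Matrix.mul_nonsing_inv _ hS, mul_one]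
  have hM1 : ∀ j k, |M j k| ≤ β j * ρ k := by
    intro j k
    have : M j k = ((H * S)ᵀ *ᵥ e j) ⬝ᵥ (S⁻¹ *ᵥ e k) := by
      rw [hMdef]
      dsimp only
      rw [← dot_mulVec_eq, Matrix.mulVec_mulVec, hHS]
    rw [this]
    exact abs_dot_le _ _
  have hMsym : ∀ j k, M j k = M k j := by
    intro j k
    rw [hMdef]
    dsimp only
    rw [dot_mulVec_eq, hH, dotProduct_comm]
  have hM2 : ∀ j k, |M j k| ≤ s j * s k := by
    intro j k
    have h2 : |M j k| ^ 2 ≤ (s j * s k) ^ 2 := by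
      calc |M j k| ^ 2 = |M j k| * |M k j| := by rw [hMsym j k, pow_two]
        _ ≤ (β j * ρ k) * (β k * ρ j) :=
            mul_le_mul (hM1 j k) (hM1 k j) (abs_nonneg _)
              (mul_nonneg (hβ0 j) (hρ0 k))
        _ = (β j * ρ j) * (β k * ρ k) := by ring
        _ = (s j * s k) ^ 2 := by rw [mul_pow, hssq, hssq]
    calc |M j k| = Real.sqrt (|M j k| ^ 2) := (Real.sqrt_sq (abs_nonneg _)).symm
      _ ≤ Real.sqrt ((s j * s k) ^ 2) := Real.sqrt_le_sqrt h2
      _ = s j * s k := Real.sqrt_sq (mul_nonneg (hs0 j) (hs0 k))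
  -- expansion of δ in the eigenbasis
  have H1 : δ = ∑ j, c j • e j := by
    have h0 : δ = U *ᵥ (Uᵀ *ᵥ δ) := by
      rw [Matrix.mulVec_mulVec, hU1, Matrix.one_mulVec]
    funext i
    rw [h0]
    simp only [Matrix.mulVec, dotProduct, Matrix.transpose_apply, Finset.sum_apply,
      Pi.smul_apply, smul_eq_mul, hcdef, heU]
    exact Finset.sum_congr rfl fun j _ => by
      rw [Finset.mul_sum, Finset.sum_mul]
      exact Finset.sum_congr rfl fun i' _ => by ring
  -- quadratic form expansion
  have hmulsum : H *ᵥ δ = ∑ k, c k • (H *ᵥ e k) := by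
    calc H *ᵥ δ = H.mulVecLin (∑ k, c k • e k) := by rw [← H1]; rfl
      _ = ∑ k, c k • (H *ᵥ e k) := by rw [map_sum]; simp [Matrix.mulVec_smul]
  have expand : δ ⬝ᵥ (H *ᵥ δ) = ∑ j, ∑ k, (c j * c k) * M j k := by
    conv_lhs => rw [hmulsum, H1]
    rw [Helper.sum_dotProduct']
    refine Finset.sum_congr rfl fun j _ => ?_
    rw [smul_dotProduct, Helper.dotProduct_sum', Finset.smul_sum]
    refine Finset.sum_congr rfl fun k _ => ?_
    rw [dotProduct_smul, hMdef]
    dsimp only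
    rw [smul_eq_mul, smul_eq_mul]
    ring
  -- first bound
  have bound1 : |δ ⬝ᵥ (H *ᵥ δ)| ≤ (∑ j, |c j| * s j) * (∑ k, |c k| * s k) := by
    rw [expand]
    calc |∑ j, ∑ k, (c j * c k) * M j k|
        ≤ ∑ j, |∑ k, (c j * c k) * M j k| := Finset.abs_sum_le_sum_abs _ _
      _ ≤ ∑ j, ∑ k, |(c j * c k) * M j k| :=
          Finset.sum_le_sum fun j _ => Finset.abs_sum_le_sum_abs _ _
      _ ≤ ∑ j, ∑ k, (|c j| * s j) * (|c k| * s k) := by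
          refine Finset.sum_le_sum fun j _ => Finset.sum_le_sum fun k _ => ?_
          rw [abs_mul, abs_mul]
          calc |c j| * |c k| * |M j k| ≤ |c j| * |c k| * (s j * s k) :=
                mul_le_mul_of_nonneg_left (hM2 j k) (mul_nonneg (abs_nonneg _) (abs_nonneg _))
            _ = (|c j| * s j) * (|c k| * s k) := by ring
      _ = (∑ j, |c j| * s j) * (∑ k, |c k| * s k) := by
          rw [Finset.sum_mul_sum]
  -- the w-trick : ∑ |c j| s j ≤ sqrt (∑ lam j * s j ^ 2)
  have cbound : ∑ j, |c j| * s j ≤ Real.sqrt (∑ j, lam j * s j ^ 2) := by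
    set ε : Fin m → ℝ := fun j => if 0 ≤ c j then s j else -(s j) with hεdef
    have hεsq : ∀ j, ε j * ε j = s j ^ 2 := by
      intro j
      rw [hεdef]
      dsimp only
      split <;> ring
    have hεc : ∀ j, ε j * c j = |c j| * s j := by
      intro j
      rw [hεdef]
      dsimp only
      rcases le_or_gt 0 (c j) with h | h
      · rw [if_pos h, abs_of_nonneg h]; ring
      · rw [if_neg (not_le.mpr h), abs_of_neg h]; ring
    set w : Fin m → ℝ := ∑ j, ε j • e j with hwdef
    have hwd : w ⬝ᵥ δ = ∑ j, |c j| * s j := by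
      rw [hwdef, Helper.sum_dotProduct']
      exact Finset.sum_congr rfl fun j _ => by
        rw [smul_dotProduct, smul_eq_mul, ← hεc j, hcdef]
    have hsqrtsymm : (posSemidefSqrt hQ)ᵀ = posSemidefSqrt hQ := by
      exact posSemidefSqrt_transpose hQ
    have hwd2 : w ⬝ᵥ δ = (posSemidefSqrt hQ *ᵥ w) ⬝ᵥ v := by
      rw [hδdef, dot_mulVec_eq, hsqrtsymm]
    have hnorv : nor v ≤ 1 := by
      rw [Helper.nor]
      calc Real.sqrt (v ⬝ᵥ v) ≤ Real.sqrt 1 := Real.sqrt_le_sqrt hv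
        _ = 1 := Real.sqrt_one
    have hQw : (posSemidefSqrt hQ *ᵥ w) ⬝ᵥ (posSemidefSqrt hQ *ᵥ w) = ∑ j, lam j * s j ^ 2 := by
      rw [mulVec_dot_self, hsqrtsymm, posSemidefSqrt_mul_self hQ]
      have hQws : Q *ᵥ w = ∑ k, (ε k * lam k) • e k := by
        calc Q *ᵥ w = Q.mulVecLin (∑ k, ε k • e k) := by rw [← hwdef]; rfl
          _ = ∑ k, ε k • (Q *ᵥ e k) := by rw [map_sum]; simp [Matrix.mulVec_smul]
          _ = ∑ k, (ε k * lam k) • e k := by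
              refine Finset.sum_congr rfl fun k _ => ?_
              rw [heig k, smul_smul]
      rw [hQws, hwdef, Helper.sum_dotProduct']
      have : ∀ j, (ε j • e j) ⬝ᵥ (∑ k, (ε k * lam k) • e k) = lam j * s j ^ 2 := by
        intro j
        rw [smul_dotProduct, Helper.dotProduct_sum']
        rw [Finset.sum_eq_single j]
        · rw [dotProduct_smul, horth j j, if_pos rfl, smul_eq_mul, smul_eq_mul,
            mul_one, ← hεsq j]
          ring
        · intro k _ hk
          rw [dotProduct_smul, horth j k, if_neg (Ne.symm hk)]
          simp
        · intro h
          exact absurd (Finset.mem_univ j) h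
      exact Finset.sum_congr rfl fun j _ => this j
    calc ∑ j, |c j| * s j = w ⬝ᵥ δ := hwd.symm
      _ = (posSemidefSqrt hQ *ᵥ w) ⬝ᵥ v := hwd2
      _ ≤ |(posSemidefSqrt hQ *ᵥ w) ⬝ᵥ v| := le_abs_self _
      _ ≤ nor (posSemidefSqrt hQ *ᵥ w) * nor v := abs_dot_le _ _
      _ ≤ nor (posSemidefSqrt hQ *ᵥ w) * 1 := mul_le_mul_of_nonneg_left hnorv (nor_nonneg _)
      _ = Real.sqrt (∑ j, lam j * s j ^ 2) := by
          rw [mul_one, Helper.nor, hQw]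
  have hsum_nonneg : 0 ≤ ∑ j, lam j * s j ^ 2 :=
    Finset.sum_nonneg fun j _ => mul_nonneg (hlam j) (sq_nonneg _)
  -- Cauchy-Schwarz on the final sum
  have final1 : ∑ j, lam j * s j ^ 2 ≤ frob (H * S) * frob (S⁻¹ * Q) := by
    have hlr : ∀ j, lam j * ρ j = nor ((S⁻¹ * Q) *ᵥ e j) := by
      intro j
      have : (S⁻¹ * Q) *ᵥ e j = lam j • (S⁻¹ *ᵥ e j) := by
        rw [← Matrix.mulVec_mulVec, heig j, Matrix.mulVec_smul]
      rw [this, Helper.nor_smul (hlam j)]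
    have CS : ∑ j, β j * (lam j * ρ j) ≤
        Real.sqrt (∑ j, β j ^ 2) * Real.sqrt (∑ j, (lam j * ρ j) ^ 2) := by
      have h := Finset.sum_mul_sq_le_sq_mul_sq Finset.univ β (fun j => lam j * ρ j)
      have hnn : 0 ≤ ∑ j, β j * (lam j * ρ j) :=
        Finset.sum_nonneg fun j _ => mul_nonneg (hβ0 j) (mul_nonneg (hlam j) (hρ0 j))
      calc ∑ j, β j * (lam j * ρ j)
          = Real.sqrt ((∑ j, β j * (lam j * ρ j)) ^ 2) := (Real.sqrt_sq hnn).symm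
        _ ≤ Real.sqrt ((∑ j, β j ^ 2) * (∑ j, (lam j * ρ j) ^ 2)) := Real.sqrt_le_sqrt h
        _ = Real.sqrt (∑ j, β j ^ 2) * Real.sqrt (∑ j, (lam j * ρ j) ^ 2) :=
            Real.sqrt_mul (Finset.sum_nonneg fun j _ => sq_nonneg _) _
    have hβfrob : Real.sqrt (∑ j, β j ^ 2) = frob (H * S) := by
      have : ∑ j, β j ^ 2 = frob ((H * S)ᵀ) ^ 2 := by
        rw [← sum_nor_sq ((H * S)ᵀ)]
      rw [this, frob_transpose, Real.sqrt_sq (frob_nonneg _)]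
    have hρfrob : Real.sqrt (∑ j, (lam j * ρ j) ^ 2) = frob (S⁻¹ * Q) := by
      have : ∑ j, (lam j * ρ j) ^ 2 = frob (S⁻¹ * Q) ^ 2 := by
        rw [← sum_nor_sq (S⁻¹ * Q)]
        exact Finset.sum_congr rfl fun j _ => by rw [hlr j]
      rw [this, Real.sqrt_sq (frob_nonneg _)]
    calc ∑ j, lam j * s j ^ 2 = ∑ j, β j * (lam j * ρ j) := by
          refine Finset.sum_congr rfl fun j _ => ?_
          rw [hssq j]; ring
      _ ≤ Real.sqrt (∑ j, β j ^ 2) * Real.sqrt (∑ j, (lam j * ρ j) ^ 2) := CS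
      _ = frob (H * S) * frob (S⁻¹ * Q) := by rw [hβfrob, hρfrob]
  calc |δ ⬝ᵥ (H *ᵥ δ)| ≤ (∑ j, |c j| * s j) * (∑ j, |c j| * s j) := bound1
    _ ≤ Real.sqrt (∑ j, lam j * s j ^ 2) * Real.sqrt (∑ j, lam j * s j ^ 2) :=
        mul_le_mul cbound cbound
          (Finset.sum_nonneg fun j _ => mul_nonneg (abs_nonneg _) (hs0 j)) (Real.sqrt_nonneg _)
    _ = ∑ j, lam j * s j ^ 2 := Real.mul_self_sqrt hsum_nonneg
    _ ≤ frob (H * S) * frob (S⁻¹ * Q) := final1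

theorem stmt13 {m : ℕ} (g : (Fin m → ℝ) → (Fin m → ℝ)) (hg : ContDiff ℝ 2 g)
    (q : Fin m → ℝ) {Q : Matrix (Fin m) (Fin m) ℝ} (hQ : Q.PosSemidef)
    (S : Fin m → Matrix (Fin m) (Fin m) ℝ) (hS : ∀ i, IsUnit (S i).det)
    (D : Set (Fin m → ℝ)) (hD : Convex ℝ D) (hDc : IsCompact D)
    (hsub : ellipsoid q hQ ⊆ D)
    (F : Fin m → ℝ) (hF0 : ∀ i, 0 ≤ F i)
    (hF : ∀ i, ∀ y ∈ D, frob (hess (fun z => g z i) y * S i) ≤ F i) :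
    ∀ δ ∈ ellipsoid 0 hQ, ∀ i,
      |g (q + δ) i - g q i - fderiv ℝ g q δ i| ≤ (1 / 2) * F i * frob ((S i)⁻¹ * Q) := by
  intro δ hδmem i
  obtain ⟨v, hv, hδv0⟩ := hδmem
  have hδv : δ = posSemidefSqrt hQ *ᵥ v := by rw [hδv0, zero_add]
  set gi : (Fin m → ℝ) → ℝ := fun z => g z i with hgidef
  have hgi : ContDiff ℝ 2 gi :=
    (ContinuousLinearMap.proj (R := ℝ) (φ := fun _ : Fin m => ℝ) i).contDiff.comp hg
  have hgidiff : Differentiable ℝ gi := hgi.differentiable (by norm_num)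
  set L : ℝ → (Fin m → ℝ) := fun t => q + t • δ with hLdef
  have hL : ∀ t : ℝ, HasDerivAt L δ t := by
    intro t
    have h1 : HasDerivAt (fun t : ℝ => t • δ) ((1 : ℝ) • δ) t := (hasDerivAt_id t).smul_const δ
    have h2 := h1.const_add q
    rw [one_smul] at h2
    exact h2
  have hmem : ∀ t ∈ Set.Icc (0 : ℝ) 1, L t ∈ D := by
    intro t ht
    apply hsub
    refine ⟨t • v, ?_, ?_⟩
    · have he : (t • v) ⬝ᵥ (t • v) = t ^ 2 * (v ⬝ᵥ v) := by
        rw [smul_dotProduct, dotProduct_smul, smul_eq_mul, smul_eq_mul]; ring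
      rw [he]
      have ht2 : t ^ 2 ≤ 1 := by nlinarith [ht.1, ht.2]
      calc t ^ 2 * (v ⬝ᵥ v) ≤ 1 * 1 :=
            mul_le_mul ht2 hv (Helper.dot_self_nonneg v) zero_le_one
        _ = 1 := mul_one 1
    · show q + t • δ = q + posSemidefSqrt hQ *ᵥ (t • v)
      rw [Matrix.mulVec_smul, hδv]
  set G : (Fin m → ℝ) → ((Fin m → ℝ) →L[ℝ] ℝ) := fderiv ℝ gi with hGdef
  have hG1 : ContDiff ℝ 1 G := hgi.fderiv_right (by norm_num)
  set f : ℝ → ℝ := fun t => gi (L t) with hfdef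
  set f1 : ℝ → ℝ := fun t => G (L t) δ with hf1def
  set f2 : ℝ → ℝ := fun t => fderiv ℝ G (L t) δ δ with hf2def
  have hdf : ∀ t, HasDerivAt f (f1 t) t := by
    intro t
    exact ((hgidiff (L t)).hasFDerivAt).comp_hasDerivAt t (hL t)
  have hdf1 : ∀ t, HasDerivAt f1 (f2 t) t := by
    intro t
    have h1 : HasFDerivAt G (fderiv ℝ G (L t)) (L t) := (hG1.differentiable (by norm_num) (L t)).hasFDerivAt
    have h2 : HasDerivAt (fun s => G (L s)) (fderiv ℝ G (L t) δ) t := h1.comp_hasDerivAt t (hL t)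
    have h3 := h2.clm_apply (hasDerivAt_const t δ)
    simpa using h3
  set K : ℝ := F i * frob ((S i)⁻¹ * Q) with hKdef
  have hK0 : 0 ≤ K := mul_nonneg (hF0 i) (Helper.frob_nonneg _)
  -- pointwise second-derivative bound
  have hexp : ∀ x : Fin m → ℝ, x = ∑ a, x a • (Pi.single a 1 : Fin m → ℝ) := by
    intro x
    funext j
    simp [Pi.single_apply, Finset.sum_apply, mul_ite]
  have hf2bound : ∀ t ∈ Set.Icc (0 : ℝ) 1, |f2 t| ≤ K := by
    intro t ht
    have hyD : L t ∈ D := hmem t ht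
    set y := L t with hydef
    set Hm : Matrix (Fin m) (Fin m) ℝ := hess (fun z => g z i) y with hHmdef
    have hGdiffAt : DifferentiableAt ℝ G y := hG1.differentiable (by norm_num) y
    have hentry : ∀ a b, Hm a b = fderiv ℝ G y (Pi.single a 1) (Pi.single b 1) := by
      intro a b
      have heq : fderiv ℝ (fun z => G z (Pi.single b 1)) y
          = (fderiv ℝ G y).flip (Pi.single b 1) := by
        rw [fderiv_clm_apply hGdiffAt (differentiableAt_const _)]
        simp
      have h0 : Hm a b = fderiv ℝ (fun z => G z (Pi.single b 1)) y (Pi.single a 1) := rfl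
      rw [h0, heq, ContinuousLinearMap.flip_apply]
    have hsymm : Hmᵀ = Hm := by
      have hsy : IsSymmSndFDerivAt ℝ gi y := (hgi.contDiffAt).isSymmSndFDerivAt (by simp [minSmoothness_of_isRCLikeNormedField])
      funext a b
      rw [Matrix.transpose_apply, hentry, hentry]
      exact hsy _ _
    have h1 : (fderiv ℝ G y) δ = ∑ a, δ a • (fderiv ℝ G y) (Pi.single a 1) := by
      conv_lhs => rw [hexp δ]
      rw [map_sum]
      exact Finset.sum_congr rfl fun a _ => by rw [_root_.map_smul]
    have h2 : ∀ a, (fderiv ℝ G y) (Pi.single a 1) δ = ∑ b, δ b * Hm a b := by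
      intro a
      conv_lhs => rw [hexp δ]
      rw [map_sum]
      exact Finset.sum_congr rfl fun b _ => by rw [_root_.map_smul, smul_eq_mul, hentry a b]
    have hbil : fderiv ℝ G y δ δ = ∑ a, ∑ b, δ a * δ b * Hm a b := by
      rw [h1]
      rw [ContinuousLinearMap.coe_sum', Finset.sum_apply]
      refine Finset.sum_congr rfl fun a _ => ?_
      rw [ContinuousLinearMap.coe_smul', Pi.smul_apply, smul_eq_mul, h2 a, Finset.mul_sum]
      exact Finset.sum_congr rfl fun b _ => by ring
    have hquad : f2 t = δ ⬝ᵥ (Hm *ᵥ δ) := by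
      rw [hf2def]
      dsimp only
      rw [← hydef, hbil]
      simp only [dotProduct, Matrix.mulVec, Finset.mul_sum]
      exact Finset.sum_congr rfl fun a _ => Finset.sum_congr rfl fun b _ => by ring
    rw [hquad, hδv]
    calc |(posSemidefSqrt hQ *ᵥ v) ⬝ᵥ (Hm *ᵥ (posSemidefSqrt hQ *ᵥ v))| ≤ frob (Hm * S i) * frob ((S i)⁻¹ * Q) :=
          quad_bound hQ hsymm (hS i) hv
      _ ≤ F i * frob ((S i)⁻¹ * Q) :=
          mul_le_mul_of_nonneg_right (hF i y hyD) (Helper.frob_nonneg _)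
  -- first mean value step
  have hstep1 : ∀ t ∈ Set.Icc (0 : ℝ) 1, |f1 t - f1 0| ≤ K * t := by
    intro t ht
    have h := Convex.norm_image_sub_le_of_norm_hasDerivWithin_le
      (f := f1) (f' := f2) (s := Set.Icc 0 t) (C := K)
      (fun x _ => (hdf1 x).hasDerivWithinAt)
      (fun x hx => by
        rw [Real.norm_eq_abs]
        exact hf2bound x ⟨hx.1, le_trans hx.2 ht.2⟩)
      (convex_Icc 0 t) ⟨le_refl 0, ht.1⟩ ⟨ht.1, le_refl t⟩
    rw [Real.norm_eq_abs, Real.norm_eq_abs, sub_zero, abs_of_nonneg ht.1] at h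
    exact h
  set h : ℝ → ℝ := fun t => f t - f 0 - t * f1 0 with hhdef
  have hdh : ∀ t, HasDerivAt h (f1 t - f1 0) t := by
    intro t
    have hd := ((hdf t).sub_const (f 0)).sub ((hasDerivAt_id t).mul_const (f1 0))
    have e : f1 t - f1 0 = f1 t - 1 * f1 0 := by ring
    rw [e]
    exact hd
  have key : ∀ σ : ℝ, |σ| = 1 → σ * h 1 ≤ K / 2 := by
    intro σ hσ
    set φ : ℝ → ℝ := fun t => K / 2 * t ^ 2 - σ * h t with hφdef
    have hdφ : ∀ t, HasDerivAt φ (K * t - σ * (f1 t - f1 0)) t := by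
      intro t
      have h1 : HasDerivAt (fun t : ℝ => K / 2 * t ^ 2) (K * t) t := by
        have h2 := (hasDerivAt_pow 2 t).const_mul (K / 2)
        have e : K / 2 * (((2 : ℕ) : ℝ) * t ^ (2 - 1)) = K * t := by norm_num; ring
        rw [e] at h2
        exact h2
      exact h1.sub ((hdh t).const_mul σ)
    have hmono : MonotoneOn φ (Set.Icc (0 : ℝ) 1) := by
      apply monotoneOn_of_deriv_nonneg (convex_Icc 0 1)
      · exact (Differentiable.continuous fun t => (hdφ t).differentiableAt).continuousOn
      · intro x _
        exact (hdφ x).differentiableAt.differentiableWithinAt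
      · intro x hx
        rw [(hdφ x).deriv]
        have hx' : x ∈ Set.Icc (0 : ℝ) 1 := interior_subset hx
        have h2 : |f1 x - f1 0| ≤ K * x := hstep1 x hx'
        have h3 : σ * (f1 x - f1 0) ≤ |f1 x - f1 0| := by
          calc σ * (f1 x - f1 0) ≤ |σ * (f1 x - f1 0)| := le_abs_self _
            _ = |f1 x - f1 0| := by rw [abs_mul, hσ, one_mul]
        linarith
    have h01 : φ 0 ≤ φ 1 :=
      hmono ⟨le_refl 0, zero_le_one⟩ ⟨zero_le_one, le_refl 1⟩ zero_le_one
    have hφ0 : φ 0 = 0 := by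
      have hh0 : h 0 = 0 := by rw [hhdef]; simp
      rw [hφdef]; dsimp only; rw [hh0]; ring
    have hφ1 : φ 1 = K / 2 - σ * h 1 := by
      rw [hφdef]; dsimp only; ring
    rw [hφ0, hφ1] at h01
    linarith
  have habs : |h 1| ≤ K / 2 := by
    have h1 := key 1 (by norm_num)
    have h2 := key (-1) (by norm_num)
    rw [abs_le]
    constructor <;> linarith
  have hgoal : g (q + δ) i - g q i - fderiv ℝ g q δ i = h 1 := by
    have hL1 : L 1 = q + δ := by rw [hLdef]; simp
    have hL0 : L 0 = q := by rw [hLdef]; simp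
    have hfd : f1 0 = fderiv ℝ g q δ i := by
      rw [hf1def]
      dsimp only
      rw [hL0]
      have hcomp : fderiv ℝ gi q
          = (ContinuousLinearMap.proj (R := ℝ) (φ := fun _ : Fin m => ℝ) i).comp
            (fderiv ℝ g q) :=
        ((ContinuousLinearMap.proj (R := ℝ) (φ := fun _ : Fin m => ℝ) i).hasFDerivAt.comp q
          ((hg.differentiable (by norm_num) q).hasFDerivAt)).fderiv
      rw [hGdef, hcomp]
      rfl
    have hf1v : f 1 = g (q + δ) i := by rw [hfdef]; dsimp only; rw [hL1]
    have hf0v : f 0 = g q i := by rw [hfdef]; dsimp only; rw [hL0]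
    rw [hhdef]
    dsimp only
    rw [hf1v, hf0v, hfd]
    ring
  rw [hgoal]
  calc |h 1| ≤ K / 2 := habs
    _ = (1 / 2) * F i * frob ((S i)⁻¹ * Q) := by rw [hKdef]; ring
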